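/- Let u : ℝ³ → ℝ³ have Schwartz components, let F : ℝ³ → Matrix (Fin 3) (Fin 3) ℝ have Schwartz entries, and let p : ℝ³ → ℝ be a Schwartz function satisfying the Poisson equation Δp = −∑_{i,j} ∂_i ∂_j (u_i u_j) + ∑_{i,j,k} ∂_i ∂_j (F_{ik} F_{jk}) pointwise on ℝ³. Then for every ξ ∈ ℝ³ with ξ ≠ 0, the Euclidean norm of the vector 𝓕(∇p)(ξ) = (𝓕(∂_1 p)(ξ), 𝓕(∂_2 p)(ξ), 𝓕(∂_3 p)(ξ)) satisfies |𝓕(∇p)(ξ)| ≤ 2π |ξ| (‖u‖²_{L²} + ‖F‖²_{L²}), where ‖u‖²_{L²} = ∑_i ‖u_i‖²_{L²} and ‖F‖²_{L²} = ∑_{i,k} ‖F_{ik}‖²_{L²}. -/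

import Mathlib

open MeasureTheory FourierTransform

namespace Stmt11Aux

open SchwartzMap Real Complex

noncomputable section

abbrev V3 := EuclideanSpace ℝ (Fin 3)

lemma schwartz_temperate (f : 𝓢(V3, ℝ)) : Function.HasTemperateGrowth ⇑f := by
  refine ⟨f.smooth ⊤, fun n => ⟨0, SchwartzMap.seminorm ℝ 0 n f, fun x => ?_⟩⟩
  simpa using f.norm_iteratedFDeriv_le_seminorm ℝ n x

def pderivCLM (_k : Type) {F : Type} [NormedAddCommGroup F] [NormedSpace ℝ F] (m : V3) :
    𝓢(V3, F) →L[ℝ] 𝓢(V3, F) :=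
  LineDeriv.lineDerivOpCLM ℝ 𝓢(V3, F) m

lemma pderivCLM_apply (_k : Type) {F : Type} [NormedAddCommGroup F] [NormedSpace ℝ F] (m : V3)
    (f : 𝓢(V3, F)) (x : V3) : pderivCLM _k m f x = fderiv ℝ f x m := rfl

def mulS (f g : 𝓢(V3, ℝ)) : 𝓢(V3, ℝ) :=
  SchwartzMap.bilinLeftCLM (ContinuousLinearMap.mul ℝ ℝ) (schwartz_temperate g) f

lemma mulS_apply (f g : 𝓢(V3,ℝ)) (x : V3) : mulS f g x = f x * g x := rfl

def oR (f : 𝓢(V3, ℝ)) : 𝓢(V3, ℂ) :=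
  SchwartzMap.bilinLeftCLM (ContinuousLinearMap.lsmul ℝ ℝ : ℝ →L[ℝ] ℂ →L[ℝ] ℂ)
    (Function.HasTemperateGrowth.const (1 : ℂ)) f

lemma oR_apply (f : 𝓢(V3,ℝ)) (x : V3) : oR f x = (f x : ℂ) := by
  show (f x) • (1:ℂ) = _
  simp [Complex.real_smul]

lemma norm_ft_le (f : V3 → ℂ) (ξ : V3) : ‖𝓕 f ξ‖ ≤ ∫ x, ‖f x‖ := by
  rw [Real.fourier_eq]
  exact norm_integral_le_integral_norm _ |>.trans (by simp)

lemma ft_deriv (f : 𝓢(V3, ℂ)) (v ξ : V3) :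
    𝓕 (fun x => fderiv ℝ (⇑f) x v) ξ
      = (2 * π * Complex.I * (inner ℝ ξ v : ℝ)) * 𝓕 (⇑f) ξ := by
  have h1 : Integrable (fderiv ℝ (⇑f)) volume := by
    have := (SchwartzMap.fderivCLM ℝ (E := V3) (F := ℂ) f).integrable (μ := volume)
    exact this
  have h2 := Real.fourier_fderiv f.integrable f.differentiable h1
  calc 𝓕 (fun x => fderiv ℝ (⇑f) x v) ξ
      = 𝓕 (fderiv ℝ (⇑f)) ξ v := (Real.fourier_continuousLinearMap_apply h1).symm
    _ = _ := by
        rw [h2]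
        simp [VectorFourier.fourierSMulRight_apply, Complex.real_smul, innerSL_apply_apply]
        rw [show ((innerSL ℝ) ξ) v = inner ℝ ξ v from rfl]; ring

lemma oR_fderiv (f : 𝓢(V3,ℝ)) (x v : V3) :
    fderiv ℝ (⇑(oR f)) x v = ((fderiv ℝ (⇑f) x v : ℝ) : ℂ) := by
  have h : ⇑(oR f) = fun y => ((f y : ℝ) : ℂ) := by ext y; exact oR_apply f y
  rw [h]
  have : fderiv ℝ (fun y => ((f y : ℝ) : ℂ)) x
      = Complex.ofRealCLM.comp (fderiv ℝ (⇑f) x) :=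
    (Complex.ofRealCLM.hasFDerivAt.comp x f.differentiableAt.hasFDerivAt).fderiv
  rw [this]; rfl

lemma oR_pderiv (f : 𝓢(V3,ℝ)) (v : V3) :
    pderivCLM ℝ v (oR f) = oR (pderivCLM ℝ v f) := by
  ext x
  rw [pderivCLM_apply, oR_fderiv, oR_apply, pderivCLM_apply]

lemma ftR_deriv (f : 𝓢(V3,ℝ)) (v ξ : V3) :
    𝓕 (fun x => ((fderiv ℝ (⇑f) x v : ℝ) : ℂ)) ξ
      = (2 * π * Complex.I * (inner ℝ ξ v : ℝ)) * 𝓕 (⇑(oR f)) ξ := by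
  have h : (fun x => ((fderiv ℝ (⇑f) x v : ℝ) : ℂ)) = fun x => fderiv ℝ (⇑(oR f)) x v := by
    ext x; rw [oR_fderiv]
  rw [h, ft_deriv (oR f) v ξ]

lemma ft_pderiv_schwartz (f : 𝓢(V3,ℂ)) (v ξ : V3) :
    𝓕 (⇑(pderivCLM ℝ v f)) ξ = (2 * π * Complex.I * (inner ℝ ξ v : ℝ)) * 𝓕 (⇑f) ξ := by
  have h : ⇑(pderivCLM ℝ v f) = fun x => fderiv ℝ (⇑f) x v := rfl
  rw [h]; exact ft_deriv f v ξ

def ftEval (ξ : V3) : 𝓢(V3,ℂ) →+ ℂ where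
  toFun f := 𝓕 (⇑f) ξ
  map_zero' := by
    have : ⇑(0 : 𝓢(V3,ℂ)) = (fun _ => (0:ℂ)) := rfl
    simp [this, Real.fourier_eq]
  map_add' f g := by
    have h : ⇑(f+g) = fun x => f x + g x := rfl
    simp only [h, Real.fourier_eq]
    rw [← integral_add]
    · simp [smul_add]
    · exact ((Real.fourierIntegral_convergent_iff ξ).2 f.integrable)
    · exact ((Real.fourierIntegral_convergent_iff ξ).2 g.integrable)

lemma ftEval_apply (ξ : V3) (f : 𝓢(V3,ℂ)) : ftEval ξ f = 𝓕 (⇑f) ξ := rfl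

lemma schwartz_memL2 (f : 𝓢(V3,ℝ)) : MemLp (⇑f) 2 volume := by
  rw [memLp_two_iff_integrable_sq f.continuous.aestronglyMeasurable]
  have := (mulS f f).integrable (μ := volume)
  simp only [Real.norm_eq_abs, sq_abs, pow_two]
  exact this

lemma holder2 (f g : 𝓢(V3,ℝ)) :
    ∫ x, ‖f x * g x‖ ≤ (eLpNorm (⇑f) 2 volume).toReal * (eLpNorm (⇑g) 2 volume).toReal := by
  have hpq : Real.HolderConjugate 2 2 := Real.HolderConjugate.two_two
  have hf : MemLp (⇑f) (ENNReal.ofReal 2) volume := by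
    simpa [ENNReal.ofReal_ofNat] using schwartz_memL2 f
  have hg : MemLp (⇑g) (ENNReal.ofReal 2) volume := by
    simpa [ENNReal.ofReal_ofNat] using schwartz_memL2 g
  have h := MeasureTheory.integral_mul_norm_le_Lp_mul_Lq hpq hf hg
  have hef : (eLpNorm (⇑f) 2 volume).toReal = (∫ x, ‖f x‖ ^ (2:ℝ)) ^ (1/(2:ℝ)) := by
    rw [(schwartz_memL2 f).eLpNorm_eq_integral_rpow_norm (by norm_num) (by norm_num)]
    rw [ENNReal.toReal_ofReal (by positivity)]
    norm_num
  have heg : (eLpNorm (⇑g) 2 volume).toReal = (∫ x, ‖g x‖ ^ (2:ℝ)) ^ (1/(2:ℝ)) := by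
    rw [(schwartz_memL2 g).eLpNorm_eq_integral_rpow_norm (by norm_num) (by norm_num)]
    rw [ENNReal.toReal_ofReal (by positivity)]
    norm_num
  rw [hef, heg]
  calc ∫ x, ‖f x * g x‖ = ∫ x, ‖f x‖ * ‖g x‖ := by simp [abs_mul]
    _ ≤ _ := h

lemma ft_mul_bound (f g : 𝓢(V3,ℝ)) (ξ : V3) :
    ‖𝓕 (⇑(oR (mulS f g))) ξ‖
      ≤ (eLpNorm (⇑f) 2 volume).toReal * (eLpNorm (⇑g) 2 volume).toReal := by
  refine (norm_ft_le _ ξ).trans ?_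
  have h : ∀ x, ‖(oR (mulS f g)) x‖ = ‖f x * g x‖ := by
    intro x; rw [oR_apply, mulS_apply, Complex.norm_real]
  calc (∫ x, ‖(oR (mulS f g)) x‖) = ∫ x, ‖f x * g x‖ := by simp only [h]
    _ ≤ _ := holder2 f g

lemma sumS_apply {n : Type*} (s : Finset n) (f : n → 𝓢(V3,ℂ)) (x : V3) :
    (∑ i ∈ s, f i) x = ∑ i ∈ s, f i x := by
  have := map_sum (SchwartzMap.coeHom 𝓢(V3,ℂ) V3 ℂ) f s
  calc (∑ i ∈ s, f i) x = (SchwartzMap.coeHom 𝓢(V3,ℂ) V3 ℂ (∑ i ∈ s, f i)) x := rfl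
    _ = (∑ i ∈ s, SchwartzMap.coeHom 𝓢(V3,ℂ) V3 ℂ (f i)) x := by rw [this]
    _ = _ := by rw [Finset.sum_apply]; rfl

lemma pd2_oR (h : 𝓢(V3,ℝ)) (v w : V3) (x : V3) :
    pderivCLM ℝ v (pderivCLM ℝ w (oR h)) x
      = ((fderiv ℝ (fun y => fderiv ℝ (⇑h) y w) x v : ℝ) : ℂ) := by
  rw [oR_pderiv, oR_pderiv, oR_apply]
  rfl

lemma ftEval_pd2 (ξ : V3) (g : 𝓢(V3,ℂ)) (v w : V3) :
    ftEval ξ (pderivCLM ℝ v (pderivCLM ℝ w g))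
      = (2 * π * Complex.I * ((inner ℝ ξ v : ℝ):ℂ))
        * ((2 * π * Complex.I * ((inner ℝ ξ w : ℝ):ℂ)) * ftEval ξ g) := by
  rw [ftEval_apply, ft_pderiv_schwartz, ftEval_apply, ft_pderiv_schwartz]

end
end Stmt11Aux

open Stmt11Aux in
/-- If Schwartz functions `u`, `F`, `p` on `ℝ³` satisfy the Poisson equation
`Δp = −∑_{i,j} ∂_i∂_j(u_i u_j) + ∑_{i,j,k} ∂_i∂_j(F_{ik} F_{jk})`, then for every
`ξ ≠ 0`, `|𝓕(∇p)(ξ)| ≤ 2π |ξ| (‖u‖²_{L²} + ‖F‖²_{L²})`. -/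
theorem stmt11 (u : Fin 3 → SchwartzMap (EuclideanSpace ℝ (Fin 3)) ℝ)
    (F : Fin 3 → Fin 3 → SchwartzMap (EuclideanSpace ℝ (Fin 3)) ℝ)
    (p : SchwartzMap (EuclideanSpace ℝ (Fin 3)) ℝ)
    (hPoisson : ∀ x : EuclideanSpace ℝ (Fin 3),
      ∑ i, fderiv ℝ (fun y => fderiv ℝ p y (EuclideanSpace.single i 1)) x
          (EuclideanSpace.single i 1)
        = -(∑ i, ∑ j, fderiv ℝ
              (fun y => fderiv ℝ (fun z => u i z * u j z) y (EuclideanSpace.single j 1))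
              x (EuclideanSpace.single i 1))
          + ∑ i, ∑ j, ∑ k, fderiv ℝ
              (fun y => fderiv ℝ (fun z => F i k z * F j k z) y (EuclideanSpace.single j 1))
              x (EuclideanSpace.single i 1)) :
    ∀ ξ : EuclideanSpace ℝ (Fin 3), ξ ≠ 0 →
      Real.sqrt (∑ i,
          ‖𝓕 (fun x => ((fderiv ℝ p x (EuclideanSpace.single i 1) : ℝ) : ℂ)) ξ‖ ^ 2)
        ≤ 2 * Real.pi * ‖ξ‖
          * ((∑ i, ((eLpNorm (fun x => u i x) 2 volume).toReal) ^ 2)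
            + ∑ i, ∑ k, ((eLpNorm (fun x => F i k x) 2 volume).toReal) ^ 2) := by
  intro ξ hξ
  have hinner : ∀ i : Fin 3, (inner ℝ ξ (EuclideanSpace.single i (1:ℝ)) : ℝ) = ξ i := by
    intro i; rw [EuclideanSpace.inner_single_right]; simp
  set a : Fin 3 → ℝ := fun i => (eLpNorm (⇑(u i)) 2 volume).toReal with ha
  set b : Fin 3 → Fin 3 → ℝ := fun i k => (eLpNorm (⇑(F i k)) 2 volume).toReal with hb
  have ha0 : ∀ i, 0 ≤ a i := fun i => ENNReal.toReal_nonneg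
  have hb0 : ∀ i k, 0 ≤ b i k := fun i k => ENNReal.toReal_nonneg
  set Φ : ℂ := 𝓕 (⇑(Stmt11Aux.oR p)) ξ with hΦ
  have hS : ∑ i, (ξ i)^2 = ‖ξ‖^2 := by
    rw [EuclideanSpace.norm_eq, Real.sq_sqrt (by positivity)]
    simp [sq_abs]
  have hSpos : (0:ℝ) < ‖ξ‖^2 := by
    have h0 : (0:ℝ) < ‖ξ‖ := norm_pos_iff.mpr hξ
    positivity
  -- Step 1 : Schwartz-level Poisson identity
  have hPQ : (∑ i, pderivCLM ℝ (EuclideanSpace.single i (1:ℝ))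
        (pderivCLM ℝ (EuclideanSpace.single i (1:ℝ)) (oR p)))
      = -(∑ i, ∑ j, pderivCLM ℝ (EuclideanSpace.single i (1:ℝ))
            (pderivCLM ℝ (EuclideanSpace.single j (1:ℝ)) (oR (mulS (u i) (u j)))))
        + ∑ i, ∑ j, ∑ k, pderivCLM ℝ (EuclideanSpace.single i (1:ℝ))
            (pderivCLM ℝ (EuclideanSpace.single j (1:ℝ))
              (oR (mulS (F i k) (F j k)))) := by
    ext x
    have hx := congrArg (fun r : ℝ => (r : ℂ)) (hPoisson x)
    push_cast at hx
    have negS : ∀ (f : SchwartzMap V3 ℂ) (y : V3), (-f) y = -(f y) := fun f y => rfl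
    simp only [SchwartzMap.add_apply, negS, sumS_apply, pd2_oR,
      show ∀ f g : SchwartzMap V3 ℝ, ⇑(mulS f g) = fun z => f z * g z from fun f g => rfl]
    exact hx
  -- Step 2 : apply the Fourier transform
  have h2 := congrArg (ftEval ξ) hPQ
  simp only [map_sum, map_neg, map_add, ftEval_pd2, hinner] at h2
  have hrw : ∀ (A B : ℝ) (z : ℂ),
      (2 * Real.pi * Complex.I * (A:ℂ)) * ((2 * Real.pi * Complex.I * (B:ℂ)) * z)
        = (2 * Real.pi * Complex.I)^2 * (((A * B : ℝ):ℂ) * z) := by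
    intros; push_cast; ring
  simp only [hrw] at h2
  simp only [← Finset.mul_sum, ← mul_neg, ← mul_add] at h2
  have hne : ((2 * Real.pi * Complex.I)^2 : ℂ) ≠ 0 := by
    apply pow_ne_zero
    simp [Real.pi_ne_zero, Complex.I_ne_zero, Complex.ext_iff]
  have h3 := mul_left_cancel₀ hne h2
  simp only [Finset.mul_sum] at h3
  -- Step 3 : norm bound for Φ
  have hLftEq : (∑ i, ((ξ i * ξ i : ℝ):ℂ) * ftEval ξ (oR p)) = ((‖ξ‖^2 : ℝ):ℂ) * Φ := by
    rw [← Finset.sum_mul]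
    congr 1
    rw [show ((‖ξ‖^2:ℝ):ℂ) = ((∑ i, (ξ i)^2 : ℝ):ℂ) from by rw [hS]]
    push_cast
    exact Finset.sum_congr rfl fun i _ => by ring
  rw [hLftEq] at h3
  have hAn : ∀ i j, ‖ftEval ξ (oR (mulS (u i) (u j)))‖ ≤ a i * a j := fun i j =>
    ft_mul_bound (u i) (u j) ξ
  have hBn : ∀ i j k, ‖ftEval ξ (oR (mulS (F i k) (F j k)))‖ ≤ b i k * b j k := fun i j k =>
    ft_mul_bound (F i k) (F j k) ξ
  have hΦbound : ‖ξ‖^2 * ‖Φ‖ ≤ ‖ξ‖^2 * ((∑ i, a i ^2) + ∑ i, ∑ k, b i k ^2) := by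
    have hnormL : ‖((‖ξ‖^2 : ℝ):ℂ) * Φ‖ = ‖ξ‖^2 * ‖Φ‖ := by
      rw [norm_mul, Complex.norm_real, Real.norm_of_nonneg hSpos.le]
    calc ‖ξ‖^2 * ‖Φ‖ = ‖((‖ξ‖^2 : ℝ):ℂ) * Φ‖ := hnormL.symm
      _ = ‖-(∑ i, ∑ j, ((ξ i * ξ j : ℝ):ℂ) * ftEval ξ (oR (mulS (u i) (u j))))
            + ∑ i, ∑ j, ∑ k, ((ξ i * ξ j : ℝ):ℂ) * ftEval ξ (oR (mulS (F i k) (F j k)))‖ := by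
          rw [h3]
      _ ≤ ‖∑ i, ∑ j, ((ξ i * ξ j : ℝ):ℂ) * ftEval ξ (oR (mulS (u i) (u j)))‖
            + ‖∑ i, ∑ j, ∑ k, ((ξ i * ξ j : ℝ):ℂ) * ftEval ξ (oR (mulS (F i k) (F j k)))‖ := by
          rw [neg_add_eq_sub]
          exact norm_sub_le _ _ |>.trans (by rw [add_comm])
      _ ≤ (∑ i, ∑ j, |ξ i| * a i * (|ξ j| * a j))
            + ∑ k, ∑ i, ∑ j, |ξ i| * b i k * (|ξ j| * b j k) := by
          gcongr ?_ + ?_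
          · calc ‖∑ i, ∑ j, ((ξ i * ξ j : ℝ):ℂ) * ftEval ξ (oR (mulS (u i) (u j)))‖
                ≤ ∑ i, ∑ j, ‖((ξ i * ξ j : ℝ):ℂ) * ftEval ξ (oR (mulS (u i) (u j)))‖ := by
                  refine (norm_sum_le _ _).trans (Finset.sum_le_sum fun i _ => norm_sum_le _ _)
              _ ≤ ∑ i, ∑ j, |ξ i| * a i * (|ξ j| * a j) := by
                  refine Finset.sum_le_sum fun i _ => Finset.sum_le_sum fun j _ => ?_
                  rw [norm_mul, Complex.norm_real, Real.norm_eq_abs, abs_mul]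
                  calc |ξ i| * |ξ j| * ‖ftEval ξ (oR (mulS (u i) (u j)))‖
                      ≤ |ξ i| * |ξ j| * (a i * a j) :=
                        mul_le_mul_of_nonneg_left (hAn i j) (by positivity)
                    _ = |ξ i| * a i * (|ξ j| * a j) := by ring
          · calc ‖∑ i, ∑ j, ∑ k, ((ξ i * ξ j : ℝ):ℂ) * ftEval ξ (oR (mulS (F i k) (F j k)))‖
                ≤ ∑ i, ∑ j, ∑ k, ‖((ξ i * ξ j : ℝ):ℂ) * ftEval ξ (oR (mulS (F i k) (F j k)))‖ := by
                  refine (norm_sum_le _ _).trans (Finset.sum_le_sum fun i _ => ?_)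
                  refine (norm_sum_le _ _).trans (Finset.sum_le_sum fun j _ => norm_sum_le _ _)
              _ ≤ ∑ i, ∑ j, ∑ k, |ξ i| * b i k * (|ξ j| * b j k) := by
                  refine Finset.sum_le_sum fun i _ => Finset.sum_le_sum fun j _ =>
                    Finset.sum_le_sum fun k _ => ?_
                  rw [norm_mul, Complex.norm_real, Real.norm_eq_abs, abs_mul]
                  calc |ξ i| * |ξ j| * ‖ftEval ξ (oR (mulS (F i k) (F j k)))‖
                      ≤ |ξ i| * |ξ j| * (b i k * b j k) :=
                        mul_le_mul_of_nonneg_left (hBn i j k) (by positivity)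
                    _ = |ξ i| * b i k * (|ξ j| * b j k) := by ring
              _ = ∑ i, ∑ k, ∑ j, |ξ i| * b i k * (|ξ j| * b j k) :=
                  Finset.sum_congr rfl fun i _ => Finset.sum_comm
              _ = ∑ k, ∑ i, ∑ j, |ξ i| * b i k * (|ξ j| * b j k) := Finset.sum_comm
      _ ≤ ‖ξ‖^2 * (∑ i, a i ^2) + ‖ξ‖^2 * (∑ i, ∑ k, b i k ^2) := by
          gcongr ?_ + ?_
          · calc (∑ i, ∑ j, |ξ i| * a i * (|ξ j| * a j))
                = (∑ i, |ξ i| * a i)^2 := by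
                  rw [sq, Finset.sum_mul_sum]
            _ ≤ (∑ i, |ξ i|^2) * (∑ i, a i ^2) := Finset.sum_mul_sq_le_sq_mul_sq _ _ _
            _ = ‖ξ‖^2 * (∑ i, a i ^2) := by rw [← hS]; simp [sq_abs]
          · calc (∑ k, ∑ i, ∑ j, |ξ i| * b i k * (|ξ j| * b j k))
                = ∑ k, (∑ i, |ξ i| * b i k)^2 := by
                  refine Finset.sum_congr rfl fun k _ => ?_
                  rw [sq, Finset.sum_mul_sum]
            _ ≤ ∑ k, (∑ i, |ξ i|^2) * (∑ i, b i k ^2) :=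
                  Finset.sum_le_sum fun k _ => Finset.sum_mul_sq_le_sq_mul_sq _ _ _
            _ = ‖ξ‖^2 * (∑ k, ∑ i, b i k ^2) := by
                  rw [← Finset.mul_sum]; congr 1; · rw [← hS]; simp [sq_abs]
            _ = ‖ξ‖^2 * (∑ i, ∑ k, b i k ^2) := by rw [Finset.sum_comm]
      _ = ‖ξ‖^2 * ((∑ i, a i ^2) + ∑ i, ∑ k, b i k ^2) := by ring
  have hΦ2 : ‖Φ‖ ≤ (∑ i, a i ^2) + ∑ i, ∑ k, b i k ^2 :=
    le_of_mul_le_mul_left (by simpa [mul_comm] using hΦbound) hSpos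
  -- Step 4 : conclusion
  have hFi : ∀ i : Fin 3,
      𝓕 (fun x => ((fderiv ℝ p x (EuclideanSpace.single i 1) : ℝ) : ℂ)) ξ
        = (2 * Real.pi * Complex.I * ((ξ i : ℝ):ℂ)) * Φ := by
    intro i
    have := ftR_deriv p (EuclideanSpace.single i (1:ℝ)) ξ
    rw [hinner] at this
    exact this
  have hnormFi : ∀ i : Fin 3,
      ‖𝓕 (fun x => ((fderiv ℝ p x (EuclideanSpace.single i 1) : ℝ) : ℂ)) ξ‖
        = 2 * Real.pi * |ξ i| * ‖Φ‖ := by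
    intro i
    rw [hFi i, norm_mul, norm_mul, norm_mul, norm_mul, Complex.norm_I, Complex.norm_real]
    simp [Real.pi_nonneg, abs_of_nonneg, Real.norm_eq_abs]
  have hsum : ∑ i, ‖𝓕 (fun x => ((fderiv ℝ p x (EuclideanSpace.single i 1) : ℝ) : ℂ)) ξ‖^2
      = (2 * Real.pi * ‖ξ‖ * ‖Φ‖)^2 := by
    simp only [hnormFi]
    have : ∀ i : Fin 3, (2 * Real.pi * |ξ i| * ‖Φ‖)^2
        = (2 * Real.pi * ‖Φ‖)^2 * (ξ i)^2 := fun i => by rw [← sq_abs (ξ i)]; ring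
    simp only [this]
    rw [← Finset.mul_sum, hS]
    ring
  rw [hsum, Real.sqrt_sq (by positivity)]
  calc 2 * Real.pi * ‖ξ‖ * ‖Φ‖
      ≤ 2 * Real.pi * ‖ξ‖ * ((∑ i, a i ^2) + ∑ i, ∑ k, b i k ^2) := by
        gcongr
    _ = _ := rfl
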